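/- For fixed n and 0 ≤ x < n, and p ∈ (0,1), the derivative of the binomial CDF satisfies dF/dp = [P(N ≤ x)(1 - P(N ≤ x))/(p(1-p))] · (E[N | N ≤ x] - E[N | N > x]), where N ~ Binomial(n, p). -/

import Mathlib

/-- The probability mass function of a Binomial(n, p) random variable at k. -/
def binomPMF (n : ℕ) (p : ℝ) (k : ℕ) : ℝ :=
  (n.choose k : ℝ) * p ^ k * (1 - p) ^ (n - k)

/-- The CDF of a Binomial(n, p) random variable evaluated at x. -/
def binomCDF (n x : ℕ) (p : ℝ) : ℝ :=
  ∑ k ∈ Finset.range (x + 1), (n.choose k : ℝ) * p ^ k * (1 - p) ^ (n - k)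

lemma binom_total (m : ℕ) (p : ℝ) :
    ∑ k ∈ Finset.range (m + 1), binomPMF m p k = 1 := by
  have h := add_pow p (1 - p) m
  simp only [add_sub_cancel, one_pow] at h
  calc ∑ k ∈ Finset.range (m + 1), binomPMF m p k
      = ∑ k ∈ Finset.range (m + 1), p ^ k * (1 - p) ^ (m - k) * (m.choose k : ℝ) :=
        Finset.sum_congr rfl (fun k _ => by unfold binomPMF; ring)
    _ = 1 := h.symm

lemma binom_mean (m : ℕ) (hm : 0 < m) (p : ℝ) :
    ∑ k ∈ Finset.range (m + 1), (k : ℝ) * binomPMF m p k = m * p := by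
  obtain ⟨m, rfl⟩ : ∃ m', m = m' + 1 := ⟨m - 1, (Nat.succ_pred_eq_of_pos hm).symm⟩
  rw [Finset.sum_range_succ']
  simp only [Nat.cast_zero, zero_mul, add_zero]
  have key : ∀ j ∈ Finset.range (m + 1),
      ((j + 1 : ℕ) : ℝ) * binomPMF (m + 1) p (j + 1)
        = ((m + 1 : ℕ) : ℝ) * p * binomPMF m p j := by
    intro j hj
    have hc : (m + 1) * m.choose j = (m + 1).choose (j + 1) * (j + 1) :=
      Nat.add_one_mul_choose_eq m j
    have hc' : ((m + 1 : ℕ) : ℝ) * (m.choose j : ℝ)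
        = (((m + 1).choose (j + 1) : ℕ) : ℝ) * ((j + 1 : ℕ) : ℝ) := by
      exact_mod_cast congrArg (Nat.cast (R := ℝ)) hc
    unfold binomPMF
    have hsub : m + 1 - (j + 1) = m - j := by omega
    rw [hsub]
    push_cast at hc' ⊢
    linear_combination (p ^ (j + 1) * (1 - p) ^ (m - j)) * hc'.symm
  rw [Finset.sum_congr rfl key, ← Finset.mul_sum, binom_total]
  push_cast
  ring

theorem stmt_16 (n x : ℕ) (p : ℝ) (hp0 : 0 < p) (hp1 : p < 1) (hx : x < n)
    (Ple Pgt Ele Egt : ℝ)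
    (hPle : Ple = ∑ k ∈ Finset.range (x + 1), binomPMF n p k)
    (hPgt : Pgt = ∑ k ∈ Finset.Icc (x + 1) n, binomPMF n p k)
    (hPle0 : 0 < Ple) (hPle1 : Ple < 1)
    (hEle : Ele = (∑ k ∈ Finset.range (x + 1), (k : ℝ) * binomPMF n p k) / Ple)
    (hEgt : Egt = (∑ k ∈ Finset.Icc (x + 1) n, (k : ℝ) * binomPMF n p k) / Pgt) :
    HasDerivAt (fun q : ℝ => binomCDF n x q)
      (Ple * (1 - Ple) / (p * (1 - p)) * (Ele - Egt)) p := by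
  set Sle := ∑ k ∈ Finset.range (x + 1), (k : ℝ) * binomPMF n p k with hSle
  set Sgt := ∑ k ∈ Finset.Icc (x + 1) n, (k : ℝ) * binomPMF n p k with hSgt
  have hsplit : ∀ f : ℕ → ℝ,
      (∑ k ∈ Finset.range (x + 1), f k) + (∑ k ∈ Finset.Icc (x + 1) n, f k)
        = ∑ k ∈ Finset.range (n + 1), f k := by
    intro f
    rw [Finset.range_eq_Ico, Finset.range_eq_Ico, ← Finset.Ico_add_one_right_eq_Icc (x + 1) n]
    exact Finset.sum_Ico_consecutive f (by omega) (by omega)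
  have hPsum : Ple + Pgt = 1 := by
    rw [hPle, hPgt, hsplit, binom_total]
  have hSsum : Sle + Sgt = n * p := by
    rw [hSle, hSgt, hsplit, binom_mean n (by omega) p]
  have hp : p ≠ 0 := ne_of_gt hp0
  have hq : (1 : ℝ) - p ≠ 0 := by linarith
  have hpq : p * (1 - p) ≠ 0 := mul_ne_zero hp hq
  -- derivative of each term
  have hderiv : HasDerivAt (fun q : ℝ => binomCDF n x q)
      (∑ k ∈ Finset.range (x + 1),
        (n.choose k : ℝ) * ((k : ℝ) * p ^ (k - 1) * (1 - p) ^ (n - k)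
          - ((n - k : ℕ) : ℝ) * p ^ k * (1 - p) ^ (n - k - 1))) p := by
    apply HasDerivAt.fun_sum
    intro k _
    have h1 : HasDerivAt (fun q : ℝ => q ^ k) ((k : ℝ) * p ^ (k - 1)) p :=
      hasDerivAt_pow k p
    have h2 : HasDerivAt (fun q : ℝ => (1 - q) ^ (n - k))
        (((n - k : ℕ) : ℝ) * (1 - p) ^ (n - k - 1) * (-1)) p :=
      ((hasDerivAt_id p).const_sub 1).pow (n - k)
    have h3 := (h1.fun_mul h2).const_mul ((n.choose k : ℝ))
    convert h3 using 1
    · rfl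
    · funext y; ring
    · ring
  have hterm : ∀ k ∈ Finset.range (x + 1),
      (n.choose k : ℝ) * ((k : ℝ) * p ^ (k - 1) * (1 - p) ^ (n - k)
        - ((n - k : ℕ) : ℝ) * p ^ k * (1 - p) ^ (n - k - 1))
      = ((k : ℝ) - n * p) * binomPMF n p k / (p * (1 - p)) := by
    intro k hk
    have hk' : k ≤ x := Nat.lt_succ_iff.mp (Finset.mem_range.mp hk)
    have hkn : k < n := lt_of_le_of_lt hk' hx
    unfold binomPMF
    rw [eq_div_iff hpq]
    have e1 : (k : ℝ) * p ^ (k - 1) * p = (k : ℝ) * p ^ k := by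
      rcases Nat.eq_zero_or_pos k with h | h
      · simp [h]
      · rw [mul_assoc, ← pow_succ]
        congr 2
        omega
    have e2 : (1 - p) ^ (n - k - 1) * (1 - p) = (1 - p) ^ (n - k) := by
      rw [← pow_succ]; congr 1; omega
    have e3 : ((n - k : ℕ) : ℝ) = (n : ℝ) - k := by
      have : k ≤ n := le_of_lt hkn
      push_cast [this]; ring
    calc (n.choose k : ℝ) * ((k : ℝ) * p ^ (k - 1) * (1 - p) ^ (n - k)
          - ((n - k : ℕ) : ℝ) * p ^ k * (1 - p) ^ (n - k - 1)) * (p * (1 - p))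
        = (n.choose k : ℝ) * (((k : ℝ) * p ^ (k - 1) * p) * (1 - p) * (1 - p) ^ (n - k)
          - ((n - k : ℕ) : ℝ) * p * p ^ k * ((1 - p) ^ (n - k - 1) * (1 - p))) := by ring
      _ = ((k : ℝ) - n * p) * ((n.choose k : ℝ) * p ^ k * (1 - p) ^ (n - k)) := by
          rw [e1, e2, e3]; ring
  have hsum : (∑ k ∈ Finset.range (x + 1),
      (n.choose k : ℝ) * ((k : ℝ) * p ^ (k - 1) * (1 - p) ^ (n - k)
        - ((n - k : ℕ) : ℝ) * p ^ k * (1 - p) ^ (n - k - 1)))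
      = (Sle - n * p * Ple) / (p * (1 - p)) := by
    rw [Finset.sum_congr rfl hterm, ← Finset.sum_div]
    congr 1
    rw [hSle, hPle, Finset.mul_sum, ← Finset.sum_sub_distrib]
    exact Finset.sum_congr rfl (fun k _ => by ring)
  rw [hsum] at hderiv
  convert hderiv using 1
  have hPgt' : Pgt = 1 - Ple := by linarith
  have hSgt' : Sgt = n * p - Sle := by linarith
  rw [hEle, hEgt, hPgt', hSgt']
  have h1P : (1 : ℝ) - Ple ≠ 0 := by linarith
  field_simp
  ring
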